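/- If φ : X_p → X_q is a finitary isomorphism with finite expectation, then a_φ(x) < ∞ for μ_p-a.e. x ∈ X_p; that is, for a.e. x there exists M ∈ ℕ such that r_φ(g⁻¹·x) ≤ |g| + M for every g ∈ F_ℓ ∖ W_a. -/

import Mathlib

open MeasureTheory ProbabilityTheory Filter

namespace Finitary

/-- The free group `F_ℓ` on `ℓ` generators. -/
abbrev FG (ℓ : ℕ) := FreeGroup (Fin ℓ)

instance {ℓ : ℕ} : Countable (FG ℓ) := FreeGroup.toWord_injective.countable

/-- The word length on the free group. -/
noncomputable def wl {ℓ : ℕ} (g : FG ℓ) : ℕ := FreeGroup.norm g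

/-- The ball `B(r)` of radius `r` centered at the identity. -/
def ball (ℓ r : ℕ) : Set (FG ℓ) := {g | wl g ≤ r}

/-- `W_a`: the set of reduced words ending in the generator `a`, together with the identity. -/
def Wa {ℓ : ℕ} (a : Fin ℓ) : Set (FG ℓ) :=
  {g | g = 1 ∨ wl g = wl (g * (FreeGroup.of a)⁻¹) + 1}

/-- The configuration space `X_p = {1,…,m}^{F_ℓ}`. -/
abbrev Conf (ℓ m : ℕ) := FG ℓ → Fin m

/-- The shift action `(g·x)_h = x_{g⁻¹h}`. -/
def shift {ℓ m : ℕ} (g : FG ℓ) (x : Conf ℓ m) : Conf ℓ m := fun h => x (g⁻¹ * h)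

/-- `μ` is the Bernoulli product measure on `X_p` with marginal weights `P`:
every cylinder set has measure equal to the product of the weights of its fixed symbols. -/
def IsBernoulli {ℓ m : ℕ} (P : Fin m → ℝ) (μ : Measure (Conf ℓ m)) : Prop :=
  IsProbabilityMeasure μ ∧
    ∀ (A : Finset (FG ℓ)) (σ : FG ℓ → Fin m),
      (μ {x | ∀ g ∈ A, x g = σ g}).toReal = ∏ g ∈ A, P (σ g)

/-- The set of radii `r` such that the ball `B(r)` determines `φ(x)_e`. -/
def codeSet {ℓ m n : ℕ} (φ : Conf ℓ m → Conf ℓ n) (x : Conf ℓ m) : Set ℕ :=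
  {r | ∀ x' : Conf ℓ m, (∀ g ∈ ball ℓ r, x' g = x g) → φ x' 1 = φ x 1}

/-- `r_φ(x)`: the least radius of a ball determining `φ(x)_e`. -/
noncomputable def rphi {ℓ m n : ℕ} (φ : Conf ℓ m → Conf ℓ n) (x : Conf ℓ m) : ℕ :=
  sInf (codeSet φ x)

/-- `v_φ(x) = |B(r_φ(x))|`. -/
noncomputable def vphi {ℓ m n : ℕ} (φ : Conf ℓ m → Conf ℓ n) (x : Conf ℓ m) : ℕ :=
  (ball ℓ (rphi φ x)).ncard

/-- A finitary coding: a measurable, equivariant, measure-preserving map which is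
a.e. finitarily determined at the identity coordinate (i.e. continuous off a null set). -/
structure IsFinitaryCoding {ℓ m n : ℕ} (μp : Measure (Conf ℓ m)) (μq : Measure (Conf ℓ n))
    (φ : Conf ℓ m → Conf ℓ n) : Prop where
  measurable : Measurable φ
  measurePreserving : MeasurePreserving φ μp μq
  equivariant : ∀ g : FG ℓ, ∀ᵐ x ∂μp, φ (shift g x) = shift g (φ x)
  finitary : ∀ᵐ x ∂μp, (codeSet φ x).Nonempty

/-- A finitary isomorphism: a pair of mutually inverse (mod null sets) finitary codings. -/
structure IsFinitaryIso {ℓ m n : ℕ} (μp : Measure (Conf ℓ m)) (μq : Measure (Conf ℓ n))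
    (φ : Conf ℓ m → Conf ℓ n) (ψ : Conf ℓ n → Conf ℓ m) : Prop where
  toCoding : IsFinitaryCoding μp μq φ
  invCoding : IsFinitaryCoding μq μp ψ
  leftInv : ∀ᵐ x ∂μp, ψ (φ x) = x
  rightInv : ∀ᵐ y ∂μq, φ (ψ y) = y

/-- Finite expectation of code volume: `∫ v_φ dμ_p < ∞` and `∫ v_{φ⁻¹} dμ_q < ∞`. -/
def FiniteExpectation {ℓ m n : ℕ} (μp : Measure (Conf ℓ m)) (μq : Measure (Conf ℓ n))
    (φ : Conf ℓ m → Conf ℓ n) (ψ : Conf ℓ n → Conf ℓ m) : Prop :=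
  (∫⁻ x, (vphi φ x : ENNReal) ∂μp) < ⊤ ∧ (∫⁻ y, (vphi ψ y : ENNReal) ∂μq) < ⊤

/-- The sub-σ-algebra generated by the coordinate maps `x ↦ x_g`, `g ∈ S`. -/
def coordAlg {ℓ m : ℕ} (S : Set (FG ℓ)) : MeasurableSpace (Conf ℓ m) :=
  MeasurableSpace.comap (fun x => S.restrict x) inferInstance

/-- The past algebra `𝒜_{p,a}`, generated by the coordinates in `W_a`. -/
def pastAlg {ℓ m : ℕ} (a : Fin ℓ) : MeasurableSpace (Conf ℓ m) := coordAlg (Wa a)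

/-- The atom of `x` for the σ-algebra generated by the coordinates in `S`. -/
def atomOn {ℓ m : ℕ} (S : Set (FG ℓ)) (x : Conf ℓ m) : Set (Conf ℓ m) :=
  {y | ∀ g ∈ S, y g = x g}

/-- The regular conditional probability `μ^𝒞(s | x)` given the sub-σ-algebra `𝒞`. -/
noncomputable def condProb {ℓ m : ℕ} (μ : Measure (Conf ℓ m)) [IsFiniteMeasure μ]
    (𝒞 : MeasurableSpace (Conf ℓ m)) (s : Set (Conf ℓ m)) (x : Conf ℓ m) : ENNReal :=
  @condExpKernel (Conf ℓ m) MeasurableSpace.pi inferInstance μ inferInstance 𝒞 x s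

/-- Conditional information `I_μ(ℬ|𝒞)(x) = −log μ^𝒞([x]_ℬ | x)`, where the atom `[x]_ℬ`
of the sub-σ-algebra `ℬ` is supplied explicitly. -/
noncomputable def condInfo {ℓ m : ℕ} (μ : Measure (Conf ℓ m)) [IsFiniteMeasure μ]
    (𝒞 : MeasurableSpace (Conf ℓ m)) (atomB : Set (Conf ℓ m)) (x : Conf ℓ m) : ℝ :=
  - Real.log ((condProb μ 𝒞 atomB x).toReal)

/-- The information cocycle `J(𝒜_{p,a}, V) = I(𝒜_{p,a}|V⁻¹𝒜_{p,a}) − I(V⁻¹𝒜_{p,a}|𝒜_{p,a})`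
for a measure-preserving `V` (the Radon–Nikodym term of the general definition vanishes). -/
noncomputable def Jcoc {ℓ m : ℕ} (a : Fin ℓ) (μ : Measure (Conf ℓ m)) [IsFiniteMeasure μ]
    (V : Conf ℓ m → Conf ℓ m) (x : Conf ℓ m) : ℝ :=
  condInfo μ (MeasurableSpace.comap V (pastAlg a)) (atomOn (Wa a) x) x
    - condInfo μ (pastAlg a) (V ⁻¹' atomOn (Wa a) (V x)) x

/-- The shift by `g` as a bijection of the configuration space. -/
def shiftEquiv {ℓ m : ℕ} (g : FG ℓ) : Equiv.Perm (Conf ℓ m) where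
  toFun := shift g
  invFun := shift g⁻¹
  left_inv x := by funext h; simp [shift, mul_assoc]
  right_inv x := by funext h; simp [shift, mul_assoc]

/-- A locally finite measure-preserving measurable bijection of `(X_p, μ)`. -/
def IsLocallyFiniteMP {ℓ m : ℕ} (μ : Measure (Conf ℓ m)) (V : Equiv.Perm (Conf ℓ m)) : Prop :=
  Measurable ⇑V ∧ Measurable ⇑V.symm ∧ MeasurePreserving ⇑V μ μ ∧
    ∀ᵐ x ∂μ, {g : FG ℓ | V x g ≠ x g}.Finite

/-- The group `G_p` generated by the shifts together with the locally finite
measure-preserving bijections. -/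
def Gp {ℓ m : ℕ} (μ : Measure (Conf ℓ m)) : Subgroup (Equiv.Perm (Conf ℓ m)) :=
  Subgroup.closure ({V | ∃ g : FG ℓ, V = shiftEquiv g} ∪ {V | IsLocallyFiniteMP μ V})

/-- The cylinder set where the coordinates on `S` are fixed to the values of `η`. -/
def cylOn {ℓ m : ℕ} (S : Set (FG ℓ)) (η : FG ℓ → Fin m) : Set (Conf ℓ m) :=
  {x | ∀ g ∈ S, x g = η g}

/-- `H_C^+`: locally finite m.p. bijections fixing all coordinates in `B(N) ∪ (F_ℓ ∖ W_a)`. -/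
def HCplus {ℓ m : ℕ} (μ : Measure (Conf ℓ m)) (a : Fin ℓ) (N : ℕ) :
    Set (Equiv.Perm (Conf ℓ m)) :=
  {h | IsLocallyFiniteMP μ h ∧ ∀ᵐ x ∂μ, ∀ g ∈ ball ℓ N ∪ (Wa a)ᶜ, h x g = x g}

/-- `H_C^-`: locally finite m.p. bijections fixing all coordinates in `W_a ∪ B(N)`. -/
def HCminus {ℓ m : ℕ} (μ : Measure (Conf ℓ m)) (a : Fin ℓ) (N : ℕ) :
    Set (Equiv.Perm (Conf ℓ m)) :=
  {h | IsLocallyFiniteMP μ h ∧ ∀ᵐ x ∂μ, ∀ g ∈ Wa a ∪ ball ℓ N, h x g = x g}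

/-- The normalized measure `μ_C(A) = μ(A)/μ(C)` (real-valued). -/
noncomputable def relMeas {ℓ m : ℕ} (μ : Measure (Conf ℓ m)) (C A : Set (Conf ℓ m)) : ℝ :=
  (μ A).toReal / (μ C).toReal

/-- The set where `m_φ(x) ≤ M`. -/
def mphiLe {ℓ m n : ℕ} (φ : Conf ℓ m → Conf ℓ n) (a : Fin ℓ) (M : ℕ) : Set (Conf ℓ m) :=
  {x | ∀ g ∈ Wa a, rphi φ (shift g⁻¹ x) ≤ wl g + M}

/-- The set where `a_φ(x) ≤ M`. -/
def aphiLe {ℓ m n : ℕ} (φ : Conf ℓ m → Conf ℓ n) (a : Fin ℓ) (M : ℕ) : Set (Conf ℓ m) :=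
  {x | ∀ g ∉ Wa a, rphi φ (shift g⁻¹ x) ≤ wl g + M}

/-- The set `D = C ∩ {x : m_φ(x) ≤ M, a_φ(x) ≤ M}` for the cylinder `C` over `B(M)`
determined by `η`. -/
def Dset {ℓ m n : ℕ} (φ : Conf ℓ m → Conf ℓ n) (a : Fin ℓ) (M : ℕ) (η : FG ℓ → Fin m) :
    Set (Conf ℓ m) :=
  cylOn (ball ℓ M) η ∩ (mphiLe φ a M ∩ aphiLe φ a M)

/-- The coboundary equation `J(𝒜_{p,a}, V) = J(𝒜_{q,a}, φVφ⁻¹)∘φ + f∘V − f` a.e.,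
for every `V ∈ G_p`. -/
def CocycleEq {ℓ m n : ℕ} (a : Fin ℓ) (μp : Measure (Conf ℓ m)) (μq : Measure (Conf ℓ n))
    [IsFiniteMeasure μp] [IsFiniteMeasure μq] (φ : Conf ℓ m → Conf ℓ n)
    (ψ : Conf ℓ n → Conf ℓ m) (f : Conf ℓ m → ℝ) : Prop :=
  ∀ V ∈ Gp μp, ∀ᵐ x ∂μp,
    Jcoc a μp (⇑V) x = Jcoc a μq (φ ∘ ⇑V ∘ ψ) (φ x) + f (V x) - f x

/-- Tail property: every point obtained from a point of `D ∖ E` by altering coordinates only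
at `a^k` for `−M−n < k < −M` (or only at `a^k` for `M < k < M+n`) lies in `A`. -/
def TailProp {ℓ m : ℕ} (a : Fin ℓ) (M : ℕ) (D E A : Set (Conf ℓ m)) : Prop :=
  ∀ x ∈ D \ E, ∀ n : ℕ, ∀ x' : Conf ℓ m,
    ((∀ g : FG ℓ,
        (¬ ∃ k : ℤ, -(M : ℤ) - (n : ℤ) < k ∧ k < -(M : ℤ) ∧ g = (FreeGroup.of a) ^ k) →
        x' g = x g) ∨
     (∀ g : FG ℓ,
        (¬ ∃ k : ℤ, (M : ℤ) < k ∧ k < (M : ℤ) + (n : ℤ) ∧ g = (FreeGroup.of a) ^ k) →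
        x' g = x g)) →
    x' ∈ A

section Aux

variable {ℓ m n : ℕ}

lemma ball_finite (ℓ r : ℕ) : (ball ℓ r).Finite := by
  have h : ball ℓ r ⊆ FreeGroup.toWord ⁻¹' {l : List (Fin ℓ × Bool) | l.length ≤ r} := by
    intro g hg
    simp only [Set.mem_preimage, Set.mem_setOf_eq]
    exact hg
  exact ((List.finite_length_le (Fin ℓ × Bool) r).preimage
    FreeGroup.toWord_injective.injOn).subset h

lemma ball_mono {r s : ℕ} (h : r ≤ s) : ball ℓ r ⊆ ball ℓ s :=
  fun _ hg => le_trans hg h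

lemma codeSet_upward {φ : Conf ℓ m → Conf ℓ n} {x : Conf ℓ m} {r s : ℕ} (h : r ≤ s)
    (hr : r ∈ codeSet φ x) : s ∈ codeSet φ x :=
  fun x' hx' => hr x' fun g hg => hx' g (ball_mono h hg)

lemma measurableSet_cyl (S : Set (FG ℓ)) (σ : FG ℓ → Fin m) :
    MeasurableSet {x : Conf ℓ m | ∀ g ∈ S, x g = σ g} := by
  have h : {x : Conf ℓ m | ∀ g ∈ S, x g = σ g}
      = ⋂ g ∈ S, (fun x : Conf ℓ m => x g) ⁻¹' {σ g} := by
    ext x; simp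
  rw [h]
  exact MeasurableSet.biInter (Set.to_countable S) fun g _ =>
    (measurable_pi_apply g) (measurableSet_singleton _)

lemma measurableSet_mem_codeSet (φ : Conf ℓ m → Conf ℓ n) (hφ : Measurable φ) (r : ℕ) :
    MeasurableSet {x : Conf ℓ m | r ∈ codeSet φ x} := by
  have hB := ball_finite ℓ r
  haveI : Finite (ball ℓ r) := hB.to_subtype
  have key : {x : Conf ℓ m | r ∈ codeSet φ x} =
      ⋃ c : Fin n, ((fun x => φ x 1) ⁻¹' {c}) ∩
        (⋃ σ : ball ℓ r → Fin m,
          {x : Conf ℓ m | (∀ x' : Conf ℓ m, (∀ g : ball ℓ r, x' g = σ g) → φ x' 1 = c)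
            ∧ ∀ g : ball ℓ r, x (g : FG ℓ) = σ g}) := by
    ext x
    simp only [Set.mem_setOf_eq, Set.mem_iUnion, Set.mem_inter_iff, Set.mem_preimage,
      Set.mem_singleton_iff]
    constructor
    · intro hx
      refine ⟨φ x 1, rfl, fun g => x g, ?_, fun g => rfl⟩
      intro x' hx'
      exact hx x' fun g hg => hx' ⟨g, hg⟩
    · rintro ⟨c, hc, σ, hσ, hxσ⟩ x' hx'
      have h1 : φ x' 1 = c := hσ x' fun g => by rw [hx' g g.2, hxσ g]
      rw [h1, hc]
  rw [key]
  refine MeasurableSet.iUnion fun c => MeasurableSet.inter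
    (((measurable_pi_apply (1 : FG ℓ)).comp hφ) (measurableSet_singleton c)) ?_
  refine MeasurableSet.iUnion fun σ => ?_
  rw [Set.setOf_and]
  refine (MeasurableSet.const _).inter ?_
  have h2 : {x : Conf ℓ m | ∀ g : ball ℓ r, x (g : FG ℓ) = σ g}
      = ⋂ g : ball ℓ r, (fun x : Conf ℓ m => x (g : FG ℓ)) ⁻¹' {σ g} := by
    ext x; simp
  rw [h2]
  exact MeasurableSet.iInter fun g => (measurable_pi_apply _) (measurableSet_singleton _)

lemma measurableSet_rphi_le (φ : Conf ℓ m → Conf ℓ n) (hφ : Measurable φ) (r : ℕ) :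
    MeasurableSet {x : Conf ℓ m | rphi φ x ≤ r} := by
  have key : {x : Conf ℓ m | rphi φ x ≤ r} =
      {x | r ∈ codeSet φ x} ∪ ⋂ s : ℕ, {x | s ∈ codeSet φ x}ᶜ := by
    ext x
    simp only [Set.mem_setOf_eq, Set.mem_union, Set.mem_iInter, Set.mem_compl_iff]
    constructor
    · intro hx
      by_cases hne : (codeSet φ x).Nonempty
      · exact Or.inl (codeSet_upward hx (Nat.sInf_mem hne))
      · exact Or.inr fun s hs => hne ⟨s, hs⟩
    · rintro (hx | hx)
      · exact Nat.sInf_le hx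
      · have hempty : codeSet φ x = ∅ := by
          ext s; simpa using hx s
        show sInf (codeSet φ x) ≤ r
        rw [hempty, Nat.sInf_empty]
        exact Nat.zero_le r
  rw [key]
  exact (measurableSet_mem_codeSet φ hφ r).union
    (MeasurableSet.iInter fun s => (measurableSet_mem_codeSet φ hφ s).compl)

lemma measurable_shift (g : FG ℓ) : Measurable (shift g : Conf ℓ m → Conf ℓ m) :=
  measurable_pi_lambda _ fun _ => measurable_pi_apply _

lemma bernoulli_shift_invariant {P : Fin m → ℝ} {μ : Measure (Conf ℓ m)}
    (hμ : IsBernoulli P μ) (g : FG ℓ) : Measure.map (shift g) μ = μ := by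
  obtain ⟨hprob, hcyl⟩ := hμ
  haveI := hprob
  set C : Set (Set (Conf ℓ m)) :=
    {s | ∃ (A : Finset (FG ℓ)) (σ : FG ℓ → Fin m), s = {x | ∀ h ∈ A, x h = σ h}} with hCdef
  have hmeasC : ∀ s ∈ C, MeasurableSet s := by
    rintro s ⟨A, σ, rfl⟩
    exact measurableSet_cyl _ σ
  have hevalC : ∀ (h : FG ℓ),
      @Measurable _ _ (MeasurableSpace.generateFrom C) _ (fun x : Conf ℓ m => x h) := by
    intro h
    refine @measurable_to_countable' (Fin m) (Conf ℓ m) _ _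
      (MeasurableSpace.generateFrom C) _ fun c => ?_
    refine MeasurableSpace.measurableSet_generateFrom ⟨{h}, fun _ => c, ?_⟩
    ext x; simp
  have hgen : (inferInstance : MeasurableSpace (Conf ℓ m)) = MeasurableSpace.generateFrom C := by
    refine le_antisymm ?_ (MeasurableSpace.generateFrom_le hmeasC)
    show (MeasurableSpace.pi : MeasurableSpace (Conf ℓ m)) ≤ _
    rw [MeasurableSpace.pi]
    exact iSup_le fun h => measurable_iff_comap_le.mp (hevalC h)
  have hpi : IsPiSystem C := by
    rintro s ⟨A, σ, rfl⟩ t ⟨B, τ, rfl⟩ hne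
    obtain ⟨x, hxA, hxB⟩ := hne
    refine ⟨A ∪ B, x, ?_⟩
    ext y
    simp only [Set.mem_inter_iff, Set.mem_setOf_eq, Finset.mem_union]
    constructor
    · rintro ⟨h1, h2⟩ h hh
      rcases hh with hh | hh
      · rw [h1 h hh, hxA h hh]
      · rw [h2 h hh, hxB h hh]
    · intro hy
      exact ⟨fun h hh => (hy h (Or.inl hh)).trans (hxA h hh),
        fun h hh => (hy h (Or.inr hh)).trans (hxB h hh)⟩
  haveI : IsProbabilityMeasure (Measure.map (shift g) μ) :=
    Measure.isProbabilityMeasure_map (measurable_shift g).aemeasurable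
  refine MeasureTheory.ext_of_generate_finite C hgen hpi ?_ (by simp)
  rintro s ⟨A, σ, rfl⟩
  rw [Measure.map_apply (measurable_shift g) (hmeasC _ ⟨A, σ, rfl⟩)]
  have hpre : shift g ⁻¹' {x : Conf ℓ m | ∀ h ∈ A, x h = σ h}
      = {x : Conf ℓ m | ∀ h ∈ A.image (fun h => g⁻¹ * h), x h = (fun h => σ (g * h)) h} := by
    ext x
    simp only [Set.mem_preimage, Set.mem_setOf_eq, Finset.mem_image, shift]
    constructor
    · rintro hx h ⟨h0, hh0, rfl⟩
      rw [mul_inv_cancel_left]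
      exact hx h0 hh0
    · intro hx h0 hh0
      have := hx (g⁻¹ * h0) ⟨h0, hh0, rfl⟩
      rwa [mul_inv_cancel_left] at this
  rw [hpre]
  have h1 := hcyl (A.image (fun h => g⁻¹ * h)) (fun h => σ (g * h))
  have h2 := hcyl A σ
  have hprod : ∏ h ∈ A.image (fun h => g⁻¹ * h), P (σ (g * h)) = ∏ h ∈ A, P (σ h) := by
    rw [Finset.prod_image (fun a _ b _ hab => by
      have := congrArg (fun z => g * z) hab
      simpa using this)]
    simp
  refine (ENNReal.toReal_eq_toReal_iff' (measure_ne_top _ _) (measure_ne_top _ _)).mp ?_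
  rw [h1, h2, hprod]

lemma bernoulli_shift_inv_apply {P : Fin m → ℝ} {μ : Measure (Conf ℓ m)}
    (hμ : IsBernoulli P μ) (g : FG ℓ) {s : Set (Conf ℓ m)} (hs : MeasurableSet s) :
    μ (shift g ⁻¹' s) = μ s := by
  rw [← Measure.map_apply (measurable_shift g) hs, bernoulli_shift_invariant hμ g]

end Aux

theorem aphi_finite_ae
    {ℓ m n : ℕ} (hℓ : 1 ≤ ℓ) (a : Fin ℓ) (P : Fin m → ℝ) (Q : Fin n → ℝ)
    (hP : ∀ i, 0 < P i) (hQ : ∀ j, 0 < Q j)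
    (hPsum : ∑ i, P i = 1) (hQsum : ∑ j, Q j = 1)
    (μp : Measure (Conf ℓ m)) (μq : Measure (Conf ℓ n))
    (hμp : IsBernoulli P μp) (hμq : IsBernoulli Q μq)
    (φ : Conf ℓ m → Conf ℓ n) (ψ : Conf ℓ n → Conf ℓ m)
    (hiso : IsFinitaryIso μp μq φ ψ) (hexp : FiniteExpectation μp μq φ ψ) :
    ∀ᵐ x ∂μp, ∃ M : ℕ, ∀ g ∉ Wa a, rphi φ (shift g⁻¹ x) ≤ wl g + M := by
  classical
  obtain ⟨hexp1, -⟩ := hexp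
  have hφm := hiso.toCoding.measurable
  haveI hprob : IsProbabilityMeasure μp := hμp.1
  have hSmeas : ∀ k : ℕ, MeasurableSet {x : Conf ℓ m | k < rphi φ x} := by
    intro k
    have h : {x : Conf ℓ m | k < rphi φ x} = {x | rphi φ x ≤ k}ᶜ := by
      ext x; simp [not_le]
    rw [h]
    exact (measurableSet_rphi_le φ hφm k).compl
  have hEmeas : ∀ g : FG ℓ,
      MeasurableSet ((shift g⁻¹) ⁻¹' {x : Conf ℓ m | wl g < rphi φ x}) :=
    fun g => (hSmeas (wl g)).preimage (measurable_shift g⁻¹)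
  set F : Conf ℓ m → ENNReal := fun x => ∑' g : FG ℓ,
    ((shift g⁻¹) ⁻¹' {x' : Conf ℓ m | wl g < rphi φ x'}).indicator
      (fun _ => (1 : ENNReal)) x with hF
  have hFmeas : Measurable F :=
    Measurable.ennreal_tsum fun g => measurable_const.indicator (hEmeas g)
  have hsum_le : ∀ y : Conf ℓ m,
      (∑' g : FG ℓ, ({x' : Conf ℓ m | wl g < rphi φ x'}).indicator (fun _ => (1 : ENNReal)) y)
        ≤ (vphi φ y : ENNReal) := by
    intro y
    have hb := ball_finite ℓ (rphi φ y)
    have hvanish : ∀ g ∉ hb.toFinset,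
        ({x' : Conf ℓ m | wl g < rphi φ x'}).indicator (fun _ => (1 : ENNReal)) y = 0 := by
      intro g hg
      apply Set.indicator_of_notMem
      intro hmem
      have hlt : wl g < rphi φ y := hmem
      exact hg (hb.mem_toFinset.mpr (show g ∈ ball ℓ (rphi φ y) from le_of_lt hlt))
    rw [tsum_eq_sum hvanish]
    calc ∑ g ∈ hb.toFinset,
          ({x' : Conf ℓ m | wl g < rphi φ x'}).indicator (fun _ => (1 : ENNReal)) y
        ≤ ∑ _g ∈ hb.toFinset, (1 : ENNReal) := by
          refine Finset.sum_le_sum fun g _ => ?_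
          rw [Set.indicator_apply]
          split_ifs <;> simp
      _ = (vphi φ y : ENNReal) := by
          rw [Finset.sum_const, nsmul_eq_mul, mul_one]
          congr 1
          rw [vphi, Set.ncard_eq_toFinset_card _ hb]
  have hkey : ∫⁻ x, F x ∂μp ≠ ⊤ := by
    have heq : ∀ g : FG ℓ,
        ∫⁻ x, ((shift g⁻¹) ⁻¹' {x' : Conf ℓ m | wl g < rphi φ x'}).indicator
          (fun _ => (1 : ENNReal)) x ∂μp
        = ∫⁻ x, ({x' : Conf ℓ m | wl g < rphi φ x'}).indicator (fun _ => (1 : ENNReal)) x ∂μp := by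
      intro g
      rw [lintegral_indicator_const (hEmeas g) 1, lintegral_indicator_const (hSmeas (wl g)) 1,
        bernoulli_shift_inv_apply hμp g⁻¹ (hSmeas (wl g))]
    have hchain : ∫⁻ x, F x ∂μp ≤ ∫⁻ x, (vphi φ x : ENNReal) ∂μp := by
      rw [hF, lintegral_tsum (fun g => (measurable_const.indicator (hEmeas g)).aemeasurable)]
      calc (∑' g : FG ℓ, ∫⁻ x, ((shift g⁻¹) ⁻¹' {x' : Conf ℓ m | wl g < rphi φ x'}).indicator
              (fun _ => (1 : ENNReal)) x ∂μp)
          = ∑' g : FG ℓ, ∫⁻ x, ({x' : Conf ℓ m | wl g < rphi φ x'}).indicator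
              (fun _ => (1 : ENNReal)) x ∂μp := tsum_congr heq
        _ = ∫⁻ x, ∑' g : FG ℓ, ({x' : Conf ℓ m | wl g < rphi φ x'}).indicator
              (fun _ => (1 : ENNReal)) x ∂μp :=
            (lintegral_tsum (fun g =>
              (measurable_const.indicator (hSmeas (wl g))).aemeasurable)).symm
        _ ≤ ∫⁻ x, (vphi φ x : ENNReal) ∂μp := lintegral_mono hsum_le
    exact (hchain.trans_lt hexp1).ne
  filter_upwards [ae_lt_top hFmeas hkey] with x hx
  have hTfin : {g : FG ℓ | wl g < rphi φ (shift g⁻¹ x)}.Finite := by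
    by_contra hinf
    have hinf2 : {g : FG ℓ | wl g < rphi φ (shift g⁻¹ x)}.Infinite := hinf
    obtain ⟨k, hk⟩ := ENNReal.exists_nat_gt hx.ne
    obtain ⟨t, hts, htc⟩ := hinf2.exists_subset_card_eq k
    have hle : (k : ENNReal) ≤ F x := by
      rw [hF]
      calc (k : ENNReal) = ∑ _g ∈ t, (1 : ENNReal) := by simp [htc]
        _ = ∑ g ∈ t, ((shift g⁻¹) ⁻¹' {x' : Conf ℓ m | wl g < rphi φ x'}).indicator
              (fun _ => (1 : ENNReal)) x := by
            refine Finset.sum_congr rfl fun g hg => ?_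
            have hgmem : x ∈ (shift g⁻¹) ⁻¹' {x' : Conf ℓ m | wl g < rphi φ x'} := hts hg
            rw [Set.indicator_of_mem hgmem]
        _ ≤ _ := ENNReal.sum_le_tsum t
    exact absurd (hle.trans_lt hk) (lt_irrefl _)
  refine ⟨hTfin.toFinset.sup (fun g => rphi φ (shift g⁻¹ x)), fun g _ => ?_⟩
  by_cases hg : wl g < rphi φ (shift g⁻¹ x)
  · have hmem : g ∈ hTfin.toFinset := hTfin.mem_toFinset.mpr hg
    exact (Finset.le_sup (f := fun g => rphi φ (shift g⁻¹ x)) hmem).trans (Nat.le_add_left _ _)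
  · exact (not_lt.mp hg).trans (Nat.le_add_right _ _)

end Finitary
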